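/- arXiv:gr-qc/0407093 — 7 statements merged into one kernel-verified Lean document; each statement's English description precedes it below -/
import Mathlib

section
/- In a continuous poset P, the collection {↟x : x ∈ P} is a basis for the Scott topology: each set ↟x is Scott open, and for every Scott open set U and every u ∈ U there exists x ∈ P with u ∈ ↟x and ↟x ⊆ U. -/
/-- A nonempty subset in which any two elements have an upper bound in the set. -/
def IsDirectedSet {P : Type*} [PartialOrder P] (S : Set P) : Prop :=
  S.Nonempty ∧ ∀ x ∈ S, ∀ y ∈ S, ∃ z ∈ S, x ≤ z ∧ y ≤ z

/-- A nonempty subset in which any two elements have a lower bound in the set. -/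
def IsFilteredSet {P : Type*} [PartialOrder P] (S : Set P) : Prop :=
  S.Nonempty ∧ ∀ x ∈ S, ∀ y ∈ S, ∃ z ∈ S, z ≤ x ∧ z ≤ y

/-- `WayBelow x y` (`x ≪ y`): for every directed set `S` that has a supremum `s`,
`y ≤ s` implies `x ≤ a` for some `a ∈ S`. -/
def WayBelow {P : Type*} [PartialOrder P] (x y : P) : Prop :=
  ∀ S : Set P, IsDirectedSet S → ∀ s, IsLUB S s → y ≤ s → ∃ a ∈ S, x ≤ a

/-- `↡x = {a | a ≪ x}`. -/
def waydown {P : Type*} [PartialOrder P] (x : P) : Set P := {a | WayBelow a x}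

/-- `↟x = {a | x ≪ a}`. -/
def wayup {P : Type*} [PartialOrder P] (x : P) : Set P := {a | WayBelow x a}

/-- A poset is continuous if every `↡x` contains a directed set with supremum `x`. -/
def IsContinuousPoset (P : Type*) [PartialOrder P] : Prop :=
  ∀ x : P, ∃ S : Set P, S ⊆ waydown x ∧ IsDirectedSet S ∧ IsLUB S x

/-- A continuous poset is bicontinuous if `≪` has the dual characterization via
filtered infima and each `↟x` is filtered with infimum `x`. -/
def IsBicontinuousPoset (P : Type*) [PartialOrder P] : Prop :=
  IsContinuousPoset P ∧
  (∀ x y : P, WayBelow x y ↔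
    ∀ S : Set P, IsFilteredSet S → ∀ i, IsGLB S i → i ≤ x → ∃ s ∈ S, s ≤ y) ∧
  (∀ x : P, IsFilteredSet (wayup x) ∧ IsGLB (wayup x) x)

/-- Scott open: an upper set inaccessible by directed suprema. -/
def IsScottOpen {P : Type*} [PartialOrder P] (U : Set P) : Prop :=
  (∀ x ∈ U, ∀ y, x ≤ y → y ∈ U) ∧
  ∀ S : Set P, IsDirectedSet S → ∀ s, IsLUB S s → s ∈ U → (S ∩ U).Nonempty


lemma wb_le' {P : Type*} [PartialOrder P] {x y : P} (h : WayBelow x y) : x ≤ y := by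
  obtain ⟨a, ha, hxa⟩ := h {y} ⟨⟨y, rfl⟩, fun u hu v hv => ⟨y, rfl, le_of_eq hu, le_of_eq hv⟩⟩
    y isLUB_singleton le_rfl
  cases ha; exact hxa

lemma le_wb' {P : Type*} [PartialOrder P] {x y z : P} (hxy : x ≤ y) (h : WayBelow y z) :
    WayBelow x z := fun S hS s hs hzs => by
  obtain ⟨a, ha, hya⟩ := h S hS s hs hzs; exact ⟨a, ha, hxy.trans hya⟩

lemma wb_le_trans' {P : Type*} [PartialOrder P] {x y z : P} (h : WayBelow x y) (hyz : y ≤ z) :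
    WayBelow x z := fun S hS s hs hzs => h S hS s hs (hyz.trans hzs)

lemma interp' {P : Type*} [PartialOrder P] (hP : IsContinuousPoset P) {x y : P}
    (h : WayBelow x y) : ∃ z, WayBelow x z ∧ WayBelow z y := by
  obtain ⟨D, hDsub, hDdir, hDlub⟩ := hP y
  -- the set of elements way below some element of D
  set A : Set P := {a | ∃ d ∈ D, WayBelow a d} with hA
  have hAdir : IsDirectedSet A := by
    constructor
    · obtain ⟨d, hd⟩ := hDdir.1
      obtain ⟨S, hSsub, hSdir, hSlub⟩ := hP d
      obtain ⟨a, ha⟩ := hSdir.1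
      exact ⟨a, d, hd, hSsub ha⟩
    · rintro a ⟨d1, hd1, ha1⟩ b ⟨d2, hd2, hb2⟩
      obtain ⟨d, hd, hd1d, hd2d⟩ := hDdir.2 d1 hd1 d2 hd2
      obtain ⟨S, hSsub, hSdir, hSlub⟩ := hP d
      obtain ⟨s1, hs1, has1⟩ := (wb_le_trans' ha1 hd1d) S hSdir d hSlub le_rfl
      obtain ⟨s2, hs2, hbs2⟩ := (wb_le_trans' hb2 hd2d) S hSdir d hSlub le_rfl
      obtain ⟨s, hs, h1s, h2s⟩ := hSdir.2 s1 hs1 s2 hs2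
      exact ⟨s, ⟨d, hd, hSsub hs⟩, has1.trans h1s, hbs2.trans h2s⟩
  have hAlub : IsLUB A y := by
    constructor
    · rintro a ⟨d, hd, had⟩
      exact (wb_le' had).trans (hDlub.1 hd)
    · intro b hb
      refine hDlub.2 fun d hd => ?_
      obtain ⟨S, hSsub, hSdir, hSlub⟩ := hP d
      refine hSlub.2 fun s hs => hb ⟨d, hd, hSsub hs⟩
  obtain ⟨a, ⟨d, hd, had⟩, hxa⟩ := h A hAdir y hAlub le_rfl
  exact ⟨d, le_wb' hxa had, hDsub hd⟩

/-- In a continuous poset, the sets `↟x` form a basis for the Scott topology. -/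
theorem wayup_basis_scott {P : Type*} [PartialOrder P] (hP : IsContinuousPoset P) :
    (∀ x : P, IsScottOpen (wayup x)) ∧
    ∀ U : Set P, IsScottOpen U → ∀ u ∈ U, ∃ x : P, u ∈ wayup x ∧ wayup x ⊆ U := by
  constructor
  · intro x
    constructor
    · intro a ha b hab
      exact wb_le_trans' ha hab
    · intro S hS s hs hxs
      obtain ⟨z, hxz, hzs⟩ := interp' hP hxs
      obtain ⟨a, ha, hza⟩ := hzs S hS s hs le_rfl
      exact ⟨a, ha, wb_le_trans' hxz hza⟩
  · intro U hU u hu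
    obtain ⟨S, hSsub, hSdir, hSlub⟩ := hP u
    obtain ⟨a, haS, haU⟩ := hU.2 S hSdir u hSlub hu
    refine ⟨a, hSsub haS, fun b hb => hU.1 a haU b (wb_le' hb)⟩
end

section
/- Let X be a locally compact Hausdorff space. For all nonempty compact subsets K, L of X, K ≪ L in the upper space UX if and only if L ⊆ int(K), where int(K) denotes the interior of K in X. -/
/-- The upper space of a topological space: nonempty compact subsets
ordered by reverse inclusion. -/
structure UpperSpace (X : Type*) [TopologicalSpace X] where
  carrier : Set X
  nonempty' : carrier.Nonempty
  compact' : IsCompact carrier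

instance {X : Type*} [TopologicalSpace X] : PartialOrder (UpperSpace X) where
  le A B := B.carrier ⊆ A.carrier
  le_refl A := Set.Subset.refl _
  le_trans A B C h1 h2 := fun x hx => h1 (h2 hx)
  le_antisymm A B h1 h2 := by
    cases A; cases B
    simp only [UpperSpace.mk.injEq]
    exact Set.Subset.antisymm h2 h1

/-- In the upper space of a locally compact Hausdorff space,
`K ≪ L` iff `L ⊆ int K`. -/
theorem upperSpace_wayBelow_iff {X : Type*} [TopologicalSpace X] [T2Space X]
    [LocallyCompactSpace X] (K L : UpperSpace X) :
    WayBelow K L ↔ L.carrier ⊆ interior K.carrier := by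
  constructor
  · -- K ≪ L → L ⊆ int K
    intro h
    -- S = compact sets N with L ⊆ int N
    set S : Set (UpperSpace X) := {N | L.carrier ⊆ interior N.carrier} with hS
    have hSne : S.Nonempty := by
      obtain ⟨N, hNc, hLN, -⟩ := exists_compact_between L.compact' isOpen_univ
        (Set.subset_univ _)
      exact ⟨⟨N, L.nonempty'.mono (hLN.trans interior_subset), hNc⟩, hLN⟩
    have hdir : IsDirectedSet S := by
      refine ⟨hSne, fun M hM N hN => ?_⟩
      refine ⟨⟨M.carrier ∩ N.carrier, ?_, M.compact'.inter_right N.compact'.isClosed⟩,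
        ?_, Set.inter_subset_left, Set.inter_subset_right⟩
      · exact L.nonempty'.mono (Set.subset_inter (hM.trans interior_subset)
          (hN.trans interior_subset))
      · show L.carrier ⊆ interior (M.carrier ∩ N.carrier)
        rw [interior_inter]
        exact Set.subset_inter hM hN
    have hsep : ∀ x, x ∉ L.carrier → ∃ N ∈ S, x ∉ N.carrier := by
      intro x hx
      obtain ⟨U, V, hU, hV, hLU, hxV, hUV⟩ :=
        SeparatedNhds.of_isCompact_isCompact L.compact' isCompact_singleton
          (Set.disjoint_singleton_right.2 hx)
      obtain ⟨N, hNc, hLN, hNU⟩ := exists_compact_between L.compact' hU hLU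
      refine ⟨⟨N, L.nonempty'.mono (hLN.trans interior_subset), hNc⟩, hLN, fun hxN => ?_⟩
      exact hUV.le_bot ⟨hNU hxN, hxV rfl⟩
    have hlub : IsLUB S L := by
      constructor
      · intro N hN
        exact (hN.trans interior_subset : L.carrier ⊆ N.carrier)
      · intro t ht
        show L ≤ t
        intro x hx
        by_contra hxL
        obtain ⟨N, hNS, hxN⟩ := hsep x hxL
        exact hxN (ht hNS hx)
    obtain ⟨N, hNS, hKN⟩ := h S hdir L hlub le_rfl
    exact hNS.trans (interior_mono hKN)
  · -- L ⊆ int K → K ≪ L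
    intro h S hdir s hlub hLs
    by_contra hcon
    push_neg at hcon
    -- hcon : ∀ a ∈ S, ¬ K ≤ a, i.e. ¬ a.carrier ⊆ K.carrier
    have hι : Nonempty S := hdir.1.to_subtype
    set U := interior K.carrier with hU
    -- the intersection I of carriers
    have hIcompat : ∀ (a : S), IsCompact (a.1.carrier \ U) := fun a =>
      a.1.compact'.diff isOpen_interior
    -- intersection of all carriers is subset of s.carrier? Need I ⊆ s.carrier
    have hInn : (⋂ a : S, a.1.carrier).Nonempty := by
      apply IsCompact.nonempty_iInter_of_directed_nonempty_isCompact_isClosed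
      · rintro ⟨a, ha⟩ ⟨b, hb⟩
        obtain ⟨z, hz, hza, hzb⟩ := hdir.2 a ha b hb
        exact ⟨⟨z, hz⟩, hza, hzb⟩
      · exact fun a => a.1.nonempty'
      · exact fun a => a.1.compact'
      · exact fun a => a.1.compact'.isClosed
    have hIcomp : IsCompact (⋂ a : S, a.1.carrier) := by
      obtain ⟨a₀⟩ := hι
      exact a₀.1.compact'.of_isClosed_subset
        (isClosed_iInter fun a => a.1.compact'.isClosed) (Set.iInter_subset _ a₀)
    set I : UpperSpace X := ⟨⋂ a : S, a.1.carrier, hInn, hIcomp⟩ with hI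
    have hIub : I ∈ upperBounds S := by
      intro a ha
      exact Set.iInter_subset (fun a : S => a.1.carrier) ⟨a, ha⟩
    have hsI : s ≤ I := hlub.2 hIub
    -- so I.carrier ⊆ s.carrier ⊆ L.carrier ⊆ U
    have hIU : (⋂ a : S, a.1.carrier) ⊆ U := fun x hx => h (hLs (hsI hx))
    -- directed family of nonempty compact closed sets a.carrier \ U has empty intersection
    have : (⋂ a : S, (a.1.carrier \ U)).Nonempty := by
      apply IsCompact.nonempty_iInter_of_directed_nonempty_isCompact_isClosed
      · rintro ⟨a, ha⟩ ⟨b, hb⟩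
        obtain ⟨z, hz, hza, hzb⟩ := hdir.2 a ha b hb
        exact ⟨⟨z, hz⟩, Set.diff_subset_diff_left hza, Set.diff_subset_diff_left hzb⟩
      · intro a
        have hns : ¬ a.1.carrier ⊆ K.carrier := hcon a.1 a.2
        obtain ⟨x, hxa, hxK⟩ := Set.not_subset.mp hns
        exact ⟨x, hxa, fun hxU => hxK (interior_subset hxU)⟩
      · exact fun a => a.1.compact'.diff isOpen_interior
      · exact fun a => (a.1.compact'.diff isOpen_interior).isClosed
    obtain ⟨x, hx⟩ := this
    simp only [Set.mem_iInter, Set.mem_diff] at hx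
    exact (hx (Classical.arbitrary S)).2 (hIU (Set.mem_iInter.2 fun a => (hx a).1))
end

section
/- Let X be a locally compact Hausdorff space. Then the upper space UX is a continuous dcpo: every directed subset of UX has a supremum, and for every K ∈ UX the set {K' ∈ UX : K ⊆ int(K')} is directed under reverse inclusion, consists of elements way below K, and has supremum K (equivalently, its intersection is K). -/
/-- The upper space of a locally compact Hausdorff space is a continuous dcpo. -/
theorem upperSpace_continuous_dcpo {X : Type*} [TopologicalSpace X] [T2Space X]
    [LocallyCompactSpace X] :
    (∀ S : Set (UpperSpace X), IsDirectedSet S → ∃ s : UpperSpace X, IsLUB S s) ∧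
    ∀ K : UpperSpace X,
      IsDirectedSet {K' : UpperSpace X | K.carrier ⊆ interior K'.carrier} ∧
      {K' : UpperSpace X | K.carrier ⊆ interior K'.carrier} ⊆ waydown K ∧
      IsLUB {K' : UpperSpace X | K.carrier ⊆ interior K'.carrier} K ∧
      (⋂ K' ∈ {K' : UpperSpace X | K.carrier ⊆ interior K'.carrier}, K'.carrier)
        = K.carrier := by

  have hle : ∀ A B : UpperSpace X, A ≤ B ↔ B.carrier ⊆ A.carrier := fun A B => Iff.rfl
  constructor
  · -- directed sets have suprema
    rintro S ⟨⟨A₀, hA₀⟩, hdir⟩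
    have hcl : ∀ A : UpperSpace X, IsClosed A.carrier := fun A => A.compact'.isClosed
    have : Nonempty S := ⟨⟨A₀, hA₀⟩⟩
    set T : Set X := ⋂ a : S, (a : UpperSpace X).carrier with hT
    have hTclosed : IsClosed T := isClosed_iInter (fun a => hcl _)
    have hTsub : T ⊆ A₀.carrier := Set.iInter_subset _ (⟨A₀, hA₀⟩ : S)
    have hTcompact : IsCompact T := A₀.compact'.of_isClosed_subset hTclosed hTsub
    have hd : Directed (· ⊇ ·) (fun a : S => (a : UpperSpace X).carrier) := by
      rintro ⟨a, ha⟩ ⟨b, hb⟩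
      obtain ⟨c, hc, hac, hbc⟩ := hdir a ha b hb
      exact ⟨⟨c, hc⟩, hac, hbc⟩
    have hTne : T.Nonempty :=
      IsCompact.nonempty_iInter_of_directed_nonempty_isCompact_isClosed
        (fun a : S => (a : UpperSpace X).carrier) hd
        (fun a => (a : UpperSpace X).nonempty')
        (fun a => (a : UpperSpace X).compact') (fun a => hcl _)
    refine ⟨⟨T, hTne, hTcompact⟩, ?_, ?_⟩
    · intro A hA
      show T ⊆ A.carrier
      exact Set.iInter_subset _ (⟨A, hA⟩ : S)
    · intro t ht
      show t.carrier ⊆ T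
      intro x hx
      exact Set.mem_iInter.mpr fun a => ht a.2 hx
  · intro K
    set SK : Set (UpperSpace X) :=
      {K' : UpperSpace X | K.carrier ⊆ interior K'.carrier} with hSK
    -- a member of SK above any open superset of K
    have hmem : ∀ U : Set X, IsOpen U → K.carrier ⊆ U →
        ∃ L ∈ SK, L.carrier ⊆ U := by
      intro U hU hKU
      obtain ⟨L, hLc, hKL, hLU⟩ := exists_compact_between K.compact' hU hKU
      have hLne : L.Nonempty := K.nonempty'.mono (hKL.trans interior_subset)
      exact ⟨⟨L, hLne, hLc⟩, hKL, hLU⟩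
    have hdirSK : IsDirectedSet SK := by
      refine ⟨?_, ?_⟩
      · obtain ⟨L, hL, _⟩ := hmem Set.univ isOpen_univ (Set.subset_univ _)
        exact ⟨L, hL⟩
      · intro A hA B hB
        obtain ⟨L, hL, hLsub⟩ := hmem (interior A.carrier ∩ interior B.carrier)
          (isOpen_interior.inter isOpen_interior) (Set.subset_inter hA hB)
        refine ⟨L, hL, ?_, ?_⟩
        · exact fun x hx => interior_subset (hLsub hx).1
        · exact fun x hx => interior_subset (hLsub hx).2
    -- intersection equals K
    have hInter : (⋂ K' ∈ SK, K'.carrier) = K.carrier := by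
      apply Set.Subset.antisymm
      · intro x hx
        by_contra hxK
        obtain ⟨L, hL, hLsub⟩ := hmem {x}ᶜ (isOpen_compl_singleton)
          (fun y hy => by simp; rintro rfl; exact hxK hy)
        have : x ∈ L.carrier := Set.mem_iInter₂.mp hx L hL
        exact hLsub this rfl
      · intro x hx
        exact Set.mem_iInter₂.mpr fun L hL => interior_subset (hL hx)
    refine ⟨hdirSK, ?_, ⟨?_, ?_⟩, hInter⟩
    · -- SK ⊆ waydown K
      intro K' hK'
      rintro S ⟨⟨A₀, hA₀⟩, hdir⟩ s hs hKs
      by_contra hno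
      push_neg at hno
      have : Nonempty S := ⟨⟨A₀, hA₀⟩⟩
      set U := interior K'.carrier with hU
      -- the sets a \ U form a directed family of nonempty compact closed sets
      have hd : Directed (· ⊇ ·) (fun a : S => (a : UpperSpace X).carrier \ U) := by
        rintro ⟨a, ha⟩ ⟨b, hb⟩
        obtain ⟨c, hc, hac, hbc⟩ := hdir a ha b hb
        exact ⟨⟨c, hc⟩, fun x hx => ⟨hac hx.1, hx.2⟩, fun x hx => ⟨hbc hx.1, hx.2⟩⟩
      have hne : ∀ a : S, ((a : UpperSpace X).carrier \ U).Nonempty := by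
        intro a
        rw [Set.diff_nonempty] at *
        intro hsub
        exact hno a a.2 (hsub.trans interior_subset)
      have hcne := IsCompact.nonempty_iInter_of_directed_nonempty_isCompact_isClosed
        (fun a : S => (a : UpperSpace X).carrier \ U) hd hne
        (fun a => (a : UpperSpace X).compact'.diff isOpen_interior)
        (fun a => ((a : UpperSpace X).compact'.isClosed).sdiff isOpen_interior)
      obtain ⟨x, hx⟩ := hcne
      rw [Set.mem_iInter] at hx
      -- the intersection of all members of S is contained in s.carrier
      have hTcl : IsClosed (⋂ a : S, (a : UpperSpace X).carrier) :=
        isClosed_iInter (fun a => (a : UpperSpace X).compact'.isClosed)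
      have hTsub : (⋂ a : S, (a : UpperSpace X).carrier) ⊆ A₀.carrier :=
        Set.iInter_subset _ (⟨A₀, hA₀⟩ : S)
      have hTcompact : IsCompact (⋂ a : S, (a : UpperSpace X).carrier) :=
        A₀.compact'.of_isClosed_subset hTcl hTsub
      have hTne : (⋂ a : S, (a : UpperSpace X).carrier).Nonempty := ⟨x, by
        rw [Set.mem_iInter]; exact fun a => (hx a).1⟩
      have hub : ∀ a ∈ S, a ≤ (⟨_, hTne, hTcompact⟩ : UpperSpace X) := by
        intro a ha
        show (⋂ a : S, (a : UpperSpace X).carrier) ⊆ a.carrier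
        exact Set.iInter_subset _ (⟨a, ha⟩ : S)
      have hsle : s ≤ (⟨_, hTne, hTcompact⟩ : UpperSpace X) := hs.2 hub
      -- so x ∈ s.carrier ⊆ K.carrier ⊆ U, contradiction
      have hxs : x ∈ s.carrier := hsle (by rw [Set.mem_iInter]; exact fun a => (hx a).1)
      have hxU : x ∈ U := hK' (hKs hxs)
      exact (hx ⟨A₀, hA₀⟩).2 hxU
    · -- K upper bound of SK
      intro L hL
      show K.carrier ⊆ L.carrier
      exact hL.trans interior_subset
    · -- K least upper bound
      intro t ht
      show t.carrier ⊆ K.carrier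
      rw [← hInter]
      exact Set.subset_iInter₂ fun L hL => ht hL
end

section
/- Let X be a locally compact Hausdorff space. The upper space UX is ω-continuous (i.e., has a countable basis as a poset) if and only if the topology of X has a countable basis. -/
/-- A basis for a poset. -/
def IsPosetBasis {P : Type*} [PartialOrder P] (B : Set P) : Prop :=
  ∀ x : P, ∃ S : Set P, S ⊆ B ∩ waydown x ∧ IsDirectedSet S ∧ IsLUB S x

open Set TopologicalSpace

section Aux

lemma directed_finset_upper {P : Type*} [PartialOrder P] {S : Set P} (hS : IsDirectedSet S)
    (F : Finset P) (hF : ↑F ⊆ S) : ∃ z ∈ S, ∀ a ∈ F, a ≤ z := by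
  classical
  induction F using Finset.induction with
  | empty => exact ⟨hS.1.choose, hS.1.choose_spec, by simp⟩
  | @insert a F' ha ih =>
    have haS : a ∈ S := hF (by simp)
    obtain ⟨z, hzS, hz⟩ := ih (fun x hx => hF (by simp [hx]))
    obtain ⟨w, hwS, haw, hzw⟩ := hS.2 a haS z hzS
    refine ⟨w, hwS, fun b hb => ?_⟩
    rcases Finset.mem_insert.1 hb with rfl | hb
    · exact haw
    · exact (hz b hb).trans hzw

variable {X : Type*} [TopologicalSpace X] [T2Space X]

lemma UpperSpace.carrier_injective :
    Function.Injective (UpperSpace.carrier (X := X)) := by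
  rintro ⟨a, _, _⟩ ⟨b, _, _⟩ h
  simpa using h

/-- In a directed family of compact sets whose intersection lies in an open `O`,
some member already lies in `O`. -/
lemma exists_mem_subset_of_iInter_subset {S : Set (UpperSpace X)} (hS : IsDirectedSet S)
    {O : Set X} (hO : IsOpen O) (h : (⋂ a ∈ S, a.carrier) ⊆ O) :
    ∃ a ∈ S, a.carrier ⊆ O := by
  classical
  obtain ⟨a₀, ha₀⟩ := hS.1
  have hKc : IsCompact (a₀.carrier ∩ Oᶜ) :=
    a₀.compact'.inter_right hO.isClosed_compl
  have hcover : (a₀.carrier ∩ Oᶜ) ⊆ ⋃ i : S, (i.1.carrier)ᶜ := by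
    rintro x ⟨hxa, hxO⟩
    have : x ∉ ⋂ a ∈ S, a.carrier := fun hx => hxO (h hx)
    simp only [mem_iInter, not_forall] at this
    obtain ⟨a, haS, hxa'⟩ := this
    exact mem_iUnion.2 ⟨⟨a, haS⟩, hxa'⟩
  obtain ⟨t, ht⟩ := hKc.elim_finite_subcover (fun i : S => (i.1.carrier)ᶜ)
    (fun i => i.1.compact'.isClosed.isOpen_compl) hcover
  obtain ⟨z, hzS, hz⟩ := directed_finset_upper hS (insert a₀ (t.image Subtype.val))
    (by
      intro x hx
      simp only [Finset.coe_insert, Set.mem_insert_iff, Finset.coe_image, Set.mem_image] at hx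
      rcases hx with rfl | ⟨i, _, rfl⟩
      · exact ha₀
      · exact i.2)
  refine ⟨z, hzS, fun x hx => ?_⟩
  by_contra hxO
  have hxa₀ : x ∈ a₀.carrier := hz a₀ (by simp) hx
  have := ht ⟨hxa₀, hxO⟩
  simp only [mem_iUnion] at this
  obtain ⟨i, hit, hxi⟩ := this
  exact hxi (hz i.1 (Finset.mem_insert.2 (Or.inr (Finset.mem_image.2 ⟨i, hit, rfl⟩))) hx)

lemma iInter_subset_of_isLUB {S : Set (UpperSpace X)} (hS : IsDirectedSet S)
    {s : UpperSpace X} (hlub : IsLUB S s) : (⋂ a ∈ S, a.carrier) ⊆ s.carrier := by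
  obtain ⟨a₀, ha₀⟩ := hS.1
  have hsub : s.carrier ⊆ ⋂ a ∈ S, a.carrier :=
    subset_iInter₂ fun a ha => hlub.1 ha
  have hne : (⋂ a ∈ S, a.carrier).Nonempty := s.nonempty'.mono hsub
  have hcl : IsClosed (⋂ a ∈ S, a.carrier) :=
    isClosed_biInter fun a _ => a.compact'.isClosed
  have hcpt : IsCompact (⋂ a ∈ S, a.carrier) :=
    a₀.compact'.of_isClosed_subset hcl (biInter_subset_of_mem ha₀)
  exact hlub.2 (fun a ha => show (UpperSpace.mk _ hne hcpt).carrier ⊆ a.carrier from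
    biInter_subset_of_mem ha)

lemma wayBelow_of_subset_interior {A B : UpperSpace X}
    (h : B.carrier ⊆ interior A.carrier) : WayBelow A B := by
  intro S hS s hlub hBs
  have hBs' : s.carrier ⊆ B.carrier := hBs
  have h1 : (⋂ a ∈ S, a.carrier) ⊆ interior A.carrier :=
    (iInter_subset_of_isLUB hS hlub).trans (hBs'.trans h)
  obtain ⟨a, haS, ha⟩ := exists_mem_subset_of_iInter_subset hS isOpen_interior h1
  exact ⟨a, haS, ha.trans interior_subset⟩

variable [LocallyCompactSpace X]

lemma subset_interior_of_wayBelow {A B : UpperSpace X}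
    (h : WayBelow A B) : B.carrier ⊆ interior A.carrier := by
  set S : Set (UpperSpace X) := {N | B.carrier ⊆ interior N.carrier} with hSdef
  have hmk : ∀ {L : Set X}, IsCompact L → B.carrier ⊆ interior L → ∃ N ∈ S, N.carrier = L := by
    intro L hLc hBL
    exact ⟨⟨L, B.nonempty'.mono (hBL.trans interior_subset), hLc⟩, hBL, rfl⟩
  have hSne : S.Nonempty := by
    obtain ⟨L, hLc, hBL, -⟩ := exists_compact_between B.compact' isOpen_univ (subset_univ _)
    obtain ⟨N, hN, -⟩ := hmk hLc hBL
    exact ⟨N, hN⟩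
  have hSdir : IsDirectedSet S := by
    refine ⟨hSne, fun N1 hN1 N2 hN2 => ?_⟩
    have hc : IsCompact (N1.carrier ∩ N2.carrier) := N1.compact'.inter_right N2.compact'.isClosed
    have hB : B.carrier ⊆ interior (N1.carrier ∩ N2.carrier) := by
      rw [interior_inter]; exact subset_inter hN1 hN2
    obtain ⟨N, hN, hNc⟩ := hmk hc hB
    refine ⟨N, hN, show N.carrier ⊆ N1.carrier from ?_, show N.carrier ⊆ N2.carrier from ?_⟩
    · rw [hNc]; exact inter_subset_left
    · rw [hNc]; exact inter_subset_right
  have hlub : IsLUB S B := by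
    constructor
    · intro N hN
      exact (hN.trans interior_subset : B.carrier ⊆ N.carrier)
    · intro t ht
      show t.carrier ⊆ B.carrier
      intro x hx
      by_contra hxB
      obtain ⟨L, hLc, hBL, hLx⟩ := exists_compact_between B.compact'
        (isOpen_compl_singleton (x := x)) (fun y hy (hxy : y ∈ ({x} : Set X)) => hxB (hxy ▸ hy))
      obtain ⟨N, hN, hNc⟩ := hmk hLc hBL
      have : t.carrier ⊆ N.carrier := ht hN
      exact hLx (hNc ▸ this hx) rfl
  obtain ⟨N, hN, hAN⟩ := h S hSdir B hlub le_rfl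
  exact hN.trans (interior_mono hAN)

lemma exists_finset_basis_elt {C : Set (Set X)} (hCb : IsTopologicalBasis C)
    {K : Set X} (hKc : IsCompact K) (hKne : K.Nonempty) {V : Set X} (hV : IsOpen V)
    (hKV : K ⊆ V) :
    ∃ F : Finset (Set X), ↑F ⊆ C ∧ K ⊆ interior (⋃ U ∈ F, closure U) ∧
      (⋃ U ∈ F, closure U) ⊆ V ∧ IsCompact (⋃ U ∈ F, closure U) ∧
      (⋃ U ∈ F, closure U).Nonempty := by
  classical
  have key : ∀ x : K, ∃ U, U ∈ C ∧ ↑x ∈ U ∧ closure U ⊆ V ∧ IsCompact (closure U) := by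
    intro x
    obtain ⟨L, hLc, hxL, hLV⟩ := exists_compact_between (isCompact_singleton (x := (x : X)))
      hV (singleton_subset_iff.2 (hKV x.2))
    obtain ⟨U, hUC, hxU, hUL⟩ := hCb.exists_subset_of_mem_open
      (hxL (mem_singleton _)) isOpen_interior
    have hclL : closure U ⊆ L := closure_minimal (hUL.trans interior_subset) hLc.isClosed
    exact ⟨U, hUC, hxU, hclL.trans hLV, hLc.of_isClosed_subset isClosed_closure hclL⟩
  choose U hUC hxU hUV hUcpt using key
  have hcover : K ⊆ ⋃ x : K, U x := fun y hy => mem_iUnion.2 ⟨⟨y, hy⟩, hxU _⟩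
  obtain ⟨t, ht⟩ := hKc.elim_finite_subcover U (fun x => hCb.isOpen (hUC x)) hcover
  refine ⟨t.image U, ?_, ?_, ?_, ?_, ?_⟩
  · intro W hW
    simp only [Finset.coe_image, mem_image] at hW
    obtain ⟨x, -, rfl⟩ := hW
    exact hUC x
  · have hopen : IsOpen (⋃ x ∈ t, U x) := isOpen_biUnion fun x _ => hCb.isOpen (hUC x)
    have hsub : (⋃ x ∈ t, U x) ⊆ ⋃ W ∈ t.image U, closure W := by
      refine iUnion₂_subset fun x hx => ?_
      exact (subset_closure).trans (subset_biUnion_of_mem (Finset.mem_image.2 ⟨x, hx, rfl⟩))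
    exact ht.trans (interior_maximal hsub hopen)
  · refine iUnion₂_subset fun W hW => ?_
    obtain ⟨x, -, rfl⟩ := Finset.mem_image.1 hW
    exact hUV x
  · exact (t.image U).isCompact_biUnion fun W hW => by
      obtain ⟨x, -, rfl⟩ := Finset.mem_image.1 hW
      exact hUcpt x
  · obtain ⟨y, hy⟩ := hKne
    have := ht hy
    simp only [mem_iUnion] at this
    obtain ⟨x, hx, hyx⟩ := this
    exact ⟨y, mem_biUnion (Finset.mem_image.2 ⟨x, hx, rfl⟩) (subset_closure hyx)⟩

end Aux

/-- The upper space of a locally compact Hausdorff space is ω-continuous iff the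
topology of `X` has a countable basis. -/
theorem upperSpace_omegaContinuous_iff {X : Type*} [TopologicalSpace X] [T2Space X]
    [LocallyCompactSpace X] :
    (∃ B : Set (UpperSpace X), B.Countable ∧ IsPosetBasis B) ↔
    (∃ C : Set (Set X), C.Countable ∧ TopologicalSpace.IsTopologicalBasis C) := by
  constructor
  · rintro ⟨B, hBc, hBb⟩
    refine ⟨(fun A : UpperSpace X => interior A.carrier) '' B, hBc.image _, ?_⟩
    refine isTopologicalBasis_of_isOpen_of_nhds ?_ ?_
    · rintro u ⟨A, -, rfl⟩; exact isOpen_interior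
    · intro x O hxO hO
      obtain ⟨K, hKc, hxK, hKO⟩ := exists_compact_between (isCompact_singleton (x := x)) hO
        (singleton_subset_iff.2 hxO)
      have hxK' : x ∈ K := interior_subset (hxK rfl)
      set KU : UpperSpace X := ⟨K, ⟨x, hxK'⟩, hKc⟩ with hKU
      obtain ⟨S, hSsub, hSdir, hSlub⟩ := hBb KU
      have h1 : (⋂ a ∈ S, a.carrier) ⊆ O := (iInter_subset_of_isLUB hSdir hSlub).trans hKO
      obtain ⟨a, haS, haO⟩ := exists_mem_subset_of_iInter_subset hSdir hO h1
      have hwb : WayBelow a KU := (hSsub haS).2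
      have hKint : K ⊆ interior a.carrier := subset_interior_of_wayBelow hwb
      exact ⟨interior a.carrier, ⟨a, (hSsub haS).1, rfl⟩, hKint hxK',
        interior_subset.trans haO⟩
  · rintro ⟨C, hCc, hCb⟩
    classical
    set g : Finset (Set X) → Set X := fun F => ⋃ U ∈ F, closure U with hg
    set B : Set (UpperSpace X) := {A | ∃ F : Finset (Set X), ↑F ⊆ C ∧ A.carrier = g F} with hB
    have hBcount : B.Countable := by
      have h1 : {F : Finset (Set X) | ↑F ⊆ C}.Countable := by
        refine ((Set.countable_setOf_finite_subset hCc).preimage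
          (Finset.coe_injective (α := Set X))).mono ?_
        intro F hF
        exact ⟨F.finite_toSet, hF⟩
      refine ((h1.image g).preimage UpperSpace.carrier_injective).mono ?_
      rintro A ⟨F, hFC, hA⟩
      exact ⟨F, hFC, hA.symm⟩
    refine ⟨B, hBcount, fun K => ?_⟩
    set S : Set (UpperSpace X) := {A | A ∈ B ∧ K.carrier ⊆ interior A.carrier} with hS
    have hmk : ∀ {V : Set X}, IsOpen V → K.carrier ⊆ V → ∃ A ∈ S, A.carrier ⊆ V := by
      intro V hV hKV
      obtain ⟨F, hFC, hKi, hAV, hAc, hAne⟩ :=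
        exists_finset_basis_elt hCb K.compact' K.nonempty' hV hKV
      exact ⟨⟨g F, hAne, hAc⟩, ⟨⟨F, hFC, rfl⟩, hKi⟩, hAV⟩
    have hSsub : S ⊆ B ∩ waydown K := fun A hA => ⟨hA.1, wayBelow_of_subset_interior hA.2⟩
    have hSne : S.Nonempty := by
      obtain ⟨A, hA, -⟩ := hmk isOpen_univ (subset_univ _); exact ⟨A, hA⟩
    have hSdir : IsDirectedSet S := by
      refine ⟨hSne, fun A1 h1 A2 h2 => ?_⟩
      obtain ⟨A, hA, hAsub⟩ := hmk (isOpen_interior.inter isOpen_interior :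
        IsOpen (interior A1.carrier ∩ interior A2.carrier)) (subset_inter h1.2 h2.2)
      exact ⟨A, hA,
        (hAsub.trans (inter_subset_left.trans interior_subset) : A.carrier ⊆ A1.carrier),
        (hAsub.trans (inter_subset_right.trans interior_subset) : A.carrier ⊆ A2.carrier)⟩
    have hSlub : IsLUB S K := by
      constructor
      · intro A hA
        exact (hA.2.trans interior_subset : K.carrier ⊆ A.carrier)
      · intro t ht
        show t.carrier ⊆ K.carrier
        intro x hx
        by_contra hxK
        obtain ⟨A, hA, hAx⟩ := hmk (isOpen_compl_singleton (x := x))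
          (fun y hy (h : y ∈ ({x} : Set X)) => hxK (h ▸ hy))
        exact hAx (ht hA hx) rfl
    exact ⟨S, hSsub, hSdir, hSlub⟩
end

section
/- Let X be a locally compact Hausdorff space. The set of maximal elements of the upper space UX is exactly the set of singletons {{x} : x ∈ X}, and the map x ↦ {x} is a homeomorphism from X onto max(UX), where max(UX) carries the subspace topology inherited from the Scott topology on UX. -/
/-- The Scott topology on a poset. -/
def scottTop (P : Type*) [PartialOrder P] : TopologicalSpace P where
  IsOpen := IsScottOpen
  isOpen_univ :=
    ⟨fun _ _ _ _ => trivial, fun S hS _ _ _ => hS.1.imp fun a ha => ⟨ha, trivial⟩⟩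
  isOpen_inter := by
    rintro U V ⟨hU1, hU2⟩ ⟨hV1, hV2⟩
    refine ⟨fun x hx y hxy => ⟨hU1 x hx.1 y hxy, hV1 x hx.2 y hxy⟩, ?_⟩
    intro S hS s hs hsUV
    obtain ⟨u, huS, huU⟩ := hU2 S hS s hs hsUV.1
    obtain ⟨v, hvS, hvV⟩ := hV2 S hS s hs hsUV.2
    obtain ⟨z, hzS, hzu, hzv⟩ := hS.2 u huS v hvS
    exact ⟨z, hzS, hU1 u huU z hzu, hV1 v hvV z hzv⟩
  isOpen_sUnion := by
    intro C hC
    constructor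
    · rintro x ⟨U, hU, hxU⟩ y hxy
      exact ⟨U, hU, (hC U hU).1 x hxU y hxy⟩
    · rintro S hS s hs ⟨U, hU, hsU⟩
      obtain ⟨a, haS, haU⟩ := (hC U hU).2 S hS s hs hsU
      exact ⟨a, haS, U, hU, haU⟩

instance {X : Type*} [TopologicalSpace X] : TopologicalSpace (UpperSpace X) :=
  scottTop (UpperSpace X)

/-
The maximal nonempty compact sets are the singletons. The subspace topology on them agrees with
the topology of `X` because, for `U` open in `X`, `□U = {K | K ⊆ U}` is Scott open (a directed
family of compact sets whose intersection lies in `U` has a member inside `U`), while `{x}` is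
the directed supremum of the compact neighbourhoods of `x` (this is where local compactness
enters), so every Scott open set containing `{x}` contains all `{y}` with `y` near `x`.
-/

open Topology

namespace UpperSpace

variable {X : Type*} [TopologicalSpace X]

lemma ext {A B : UpperSpace X} (h : A.carrier = B.carrier) : A = B := by
  cases A; cases B; simpa using h

lemma le_iff_subset {A B : UpperSpace X} : A ≤ B ↔ B.carrier ⊆ A.carrier := Iff.rfl

def singleton (x : X) : UpperSpace X :=
  ⟨{x}, Set.singleton_nonempty x, isCompact_singleton⟩

lemma le_singleton_iff {A : UpperSpace X} {x : X} : A ≤ singleton x ↔ x ∈ A.carrier :=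
  Set.singleton_subset_iff

lemma forall_le_imp_eq_iff_exists_carrier_eq_singleton (K : UpperSpace X) :
    (∀ L : UpperSpace X, K ≤ L → L = K) ↔ ∃ x : X, K.carrier = {x} := by
  constructor
  · intro hK
    obtain ⟨x, hx⟩ := K.nonempty'
    exact ⟨x, by rw [← hK (singleton x) (le_singleton_iff.mpr hx)]; rfl⟩
  · rintro ⟨x, hx⟩ L hKL
    rw [le_iff_subset, hx] at hKL
    exact ext (hx ▸ (Set.Nonempty.subset_singleton_iff L.nonempty').mp hKL)

lemma iInter_subset_of_isLUB [T2Space X] {S : Set (UpperSpace X)} (hS : S.Nonempty)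
    {s : UpperSpace X} (hs : IsLUB S s) : ⋂ A : S, A.1.carrier ⊆ s.carrier := by
  intro y hy
  obtain ⟨A₀, hA₀⟩ := hS
  let T : UpperSpace X := ⟨⋂ A : S, A.1.carrier, ⟨y, hy⟩,
    A₀.compact'.of_isClosed_subset (isClosed_iInter fun A => A.1.compact'.isClosed)
      (Set.iInter_subset (fun A : S => A.1.carrier) ⟨A₀, hA₀⟩)⟩
  have hT : T ∈ upperBounds S := fun A hA => Set.iInter_subset (fun A : S => A.1.carrier) ⟨A, hA⟩
  exact hs.2 hT hy

lemma isScottOpen_setOf_carrier_subset [T2Space X] {U : Set X} (hU : IsOpen U) :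
    IsScottOpen {K : UpperSpace X | K.carrier ⊆ U} := by
  refine ⟨fun K hK L hKL => Set.Subset.trans hKL hK, fun S hS s hs hsU => ?_⟩
  have : Nonempty S := hS.1.to_subtype
  have hdir : Directed (· ⊇ ·) fun A : S => A.1.carrier := by
    rintro ⟨A, hA⟩ ⟨B, hB⟩
    obtain ⟨C, hC, hAC, hBC⟩ := hS.2 A hA B hB
    exact ⟨⟨C, hC⟩, hAC, hBC⟩
  obtain ⟨⟨A, hA⟩, hAU⟩ := exists_subset_nhds_of_isCompact hdir (fun A => A.1.compact')
    fun y hy => hU.mem_nhds (hsU (iInter_subset_of_isLUB hS.1 hs hy))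
  exact ⟨A, hA, hAU⟩

lemma isDirectedSet_setOf_carrier_mem_nhds [LocallyCompactSpace X] (x : X) :
    IsDirectedSet {A : UpperSpace X | A.carrier ∈ 𝓝 x} := by
  constructor
  · obtain ⟨K, hK, hKx⟩ := exists_compact_mem_nhds x
    exact ⟨⟨K, ⟨x, mem_of_mem_nhds hKx⟩, hK⟩, hKx⟩
  · intro A hA B hB
    obtain ⟨K, hKx, hKAB, hK⟩ := local_compact_nhds (Filter.inter_mem hA hB)
    exact ⟨⟨K, ⟨x, mem_of_mem_nhds hKx⟩, hK⟩, hKx,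
      hKAB.trans Set.inter_subset_left, hKAB.trans Set.inter_subset_right⟩

lemma isLUB_setOf_carrier_mem_nhds [T1Space X] [LocallyCompactSpace X] (x : X) :
    IsLUB {A : UpperSpace X | A.carrier ∈ 𝓝 x} (singleton x) := by
  refine ⟨fun A hA => le_singleton_iff.mpr (mem_of_mem_nhds hA), fun t ht y hy => ?_⟩
  by_contra hyx
  obtain ⟨K, hKx, hKy, hK⟩ := local_compact_nhds (isOpen_compl_singleton.mem_nhds (Ne.symm hyx))
  exact hKy (ht (a := ⟨K, ⟨x, mem_of_mem_nhds hKx⟩, hK⟩) hKx hy) rfl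

lemma continuous_singleton [T1Space X] [LocallyCompactSpace X] :
    Continuous (singleton : X → UpperSpace X) := by
  refine continuous_def.mpr fun W hW => isOpen_iff_mem_nhds.mpr fun x hx => ?_
  obtain ⟨A, hAx, hAW⟩ := hW.2 _ (isDirectedSet_setOf_carrier_mem_nhds x) _
    (isLUB_setOf_carrier_mem_nhds x) hx
  exact Filter.mem_of_superset (interior_mem_nhds.mpr hAx) fun y hy =>
    hW.1 A hAW _ (le_singleton_iff.mpr (interior_subset hy))

lemma eq_singleton_of_singleton_le (x : X) (L : UpperSpace X) (h : singleton x ≤ L) :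
    L = singleton x :=
  (forall_le_imp_eq_iff_exists_carrier_eq_singleton (singleton x)).mpr ⟨x, rfl⟩ L h

noncomputable def singletonHomeomorph [T2Space X] [LocallyCompactSpace X] :
    X ≃ₜ {K : UpperSpace X // ∀ L : UpperSpace X, K ≤ L → L = K} :=
  let point (K : {K : UpperSpace X // ∀ L : UpperSpace X, K ≤ L → L = K}) : X :=
    ((forall_le_imp_eq_iff_exists_carrier_eq_singleton K.1).mp K.2).choose
  have carrier_eq (K) : K.1.carrier = {point K} :=
    ((forall_le_imp_eq_iff_exists_carrier_eq_singleton K.1).mp K.2).choose_spec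
  { toFun x := ⟨singleton x, eq_singleton_of_singleton_le x⟩
    invFun := point
    left_inv x := (Set.singleton_eq_singleton_iff.mp (carrier_eq ⟨singleton x, _⟩)).symm
    right_inv K := Subtype.ext (ext (carrier_eq K).symm)
    continuous_toFun := continuous_singleton.subtype_mk _
    continuous_invFun := continuous_def.mpr fun U hU => by
      have hpre : point ⁻¹' U = Subtype.val ⁻¹' {K : UpperSpace X | K.carrier ⊆ U} := by
        ext K
        simp only [Set.mem_preimage, Set.mem_ofPred_eq, carrier_eq K, Set.singleton_subset_iff]
      rw [hpre]
      exact continuous_subtype_val.isOpen_preimage _ (isScottOpen_setOf_carrier_subset hU) }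

end UpperSpace

/-- The maximal elements of the upper space are exactly the singletons, and
`x ↦ {x}` is a homeomorphism from `X` onto `max(UX)` with the relative Scott
topology. -/
theorem upperSpace_max_homeo {X : Type*} [TopologicalSpace X] [T2Space X]
    [LocallyCompactSpace X] :
    (∀ K : UpperSpace X, (∀ L : UpperSpace X, K ≤ L → L = K) ↔ ∃ x : X, K.carrier = {x}) ∧
    ∃ h : X ≃ₜ {K : UpperSpace X // ∀ L : UpperSpace X, K ≤ L → L = K},
      ∀ x : X, (h x).val.carrier = {x} :=
  ⟨UpperSpace.forall_le_imp_eq_iff_exists_carrier_eq_singleton,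
    UpperSpace.singletonHomeomorph, fun _ => rfl⟩
end

section
/- On a bicontinuous poset P, the Lawson topology is contained in the interval topology: every Lawson open set (every set of the form ↟x \ ↑F with F finite) is open in the interval topology. -/
/-- The way-below open interval `(a,b) = {x | a ≪ x ≪ b}`. -/
def wayInterval {P : Type*} [PartialOrder P] (a b : P) : Set P :=
  {x | WayBelow a x ∧ WayBelow x b}

/-- The interval topology on a (bicontinuous) poset: generated by the sets `(a,b)`. -/
def intervalTop (P : Type*) [PartialOrder P] : TopologicalSpace P :=
  TopologicalSpace.generateFrom {U : Set P | ∃ a b : P, U = wayInterval a b}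

/-- The Lawson topology on a continuous poset: generated by the sets `↟x \ ↑F`
for `F` finite. -/
def lawsonTop (P : Type*) [PartialOrder P] : TopologicalSpace P :=
  TopologicalSpace.generateFrom
    {U : Set P | ∃ (x : P) (F : Set P), F.Finite ∧ U = wayup x \ {y | ∃ f ∈ F, f ≤ y}}

/-! Fix `z ∈ ↟x \ ↑F`. For each `f ∈ F`, `f ≤ z` fails and `z` is the infimum of `↟z`, so some
`c_f ∈ ↟z` has `f ≪ c_f` failing. As `↟z` is filtered, it contains a lower bound `b` of the finitely
many `c_f`. The interval `(x, b)` then contains `z` and misses `↑F`, because `f ≤ w ≪ b` would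
give `f ≪ b ≤ c_f`. -/

section WayBelow

variable {P : Type*} [PartialOrder P] {x y z : P}

theorem WayBelow.le (h : WayBelow x y) : x ≤ y := by
  obtain ⟨a, rfl, hxa⟩ := h {y} ⟨⟨y, rfl⟩, fun u hu v hv => ⟨y, rfl, hu.le, hv.le⟩⟩ y
    isLUB_singleton le_rfl
  exact hxa

theorem WayBelow.trans_le (h : WayBelow x y) (hyz : y ≤ z) : WayBelow x z :=
  fun S hS s hs hzs => h S hS s hs (hyz.trans hzs)

theorem LE.le.trans_wayBelow (hxy : x ≤ y) (h : WayBelow y z) : WayBelow x z :=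
  fun S hS s hs hzs =>
    let ⟨a, ha, hya⟩ := h S hS s hs hzs
    ⟨a, ha, hxy.trans hya⟩

end WayBelow

theorem IsFilteredSet.exists_mem_lowerBounds {P : Type*} [PartialOrder P] {S T : Set P}
    (hS : IsFilteredSet S) (hT : T.Finite) (hTS : T ⊆ S) : ∃ b ∈ S, b ∈ lowerBounds T := by
  induction T, hT using Set.Finite.induction_on with
  | empty => exact ⟨hS.1.some, hS.1.some_mem, by simp⟩
  | @insert t T _ _ ih =>
    obtain ⟨b, hbS, hbT⟩ := ih ((Set.subset_insert t T).trans hTS)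
    obtain ⟨c, hcS, hct, hcb⟩ := hS.2 t (hTS (Set.mem_insert t T)) b hbS
    refine ⟨c, hcS, ?_⟩
    rw [lowerBounds_insert]
    exact ⟨hct, fun _ hu => hcb.trans (hbT hu)⟩

theorem exists_wayBelow_forall_not_wayBelow {P : Type*} [PartialOrder P] {z : P}
    (hfilt : IsFilteredSet (wayup z)) (hglb : IsGLB (wayup z) z) {F : Set P} (hF : F.Finite)
    (hFz : ∀ f ∈ F, ¬ f ≤ z) : ∃ b, WayBelow z b ∧ ∀ f ∈ F, ¬ WayBelow f b := by
  have hsep : ∀ f ∈ F, ∃ c ∈ wayup z, ¬ WayBelow f c := fun f hf => by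
    by_contra! h
    exact hFz f hf (hglb.2 fun c hc => (h c hc).le)
  choose! c hcz hfc using hsep
  obtain ⟨b, hbz, hbc⟩ := hfilt.exists_mem_lowerBounds (hF.image c) (Set.image_subset_iff.2 hcz)
  exact ⟨b, hbz, fun f hf hfb => hfc f hf (hfb.trans_le (hbc (Set.mem_image_of_mem c hf)))⟩

theorem exists_wayInterval_subset_wayup_diff {P : Type*} [PartialOrder P]
    (hP : IsBicontinuousPoset P) {x z : P} {F : Set P} (hF : F.Finite)
    (hz : z ∈ wayup x \ {y | ∃ f ∈ F, f ≤ y}) :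
    ∃ b, z ∈ wayInterval x b ∧ wayInterval x b ⊆ wayup x \ {y | ∃ f ∈ F, f ≤ y} := by
  obtain ⟨hxz, hzF⟩ := hz
  obtain ⟨b, hzb, hFb⟩ := exists_wayBelow_forall_not_wayBelow (hP.2.2 z).1 (hP.2.2 z).2 hF
    fun f hf hfz => hzF ⟨f, hf, hfz⟩
  refine ⟨b, ⟨hxz, hzb⟩, fun w ⟨hxw, hwb⟩ => ⟨hxw, ?_⟩⟩
  rintro ⟨f, hf, hfw⟩
  exact hFb f hf (hfw.trans_wayBelow hwb)

/-- On a bicontinuous poset, the Lawson topology is contained in the interval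
topology. -/
theorem lawson_le_interval {P : Type*} [PartialOrder P] (hP : IsBicontinuousPoset P) :
    (∀ (x : P) (F : Set P), F.Finite →
      (intervalTop P).IsOpen (wayup x \ {y | ∃ f ∈ F, f ≤ y})) ∧
    ∀ U : Set P, (lawsonTop P).IsOpen U → (intervalTop P).IsOpen U := by
  have hbasic : ∀ (x : P) (F : Set P), F.Finite →
      (intervalTop P).IsOpen (wayup x \ {y | ∃ f ∈ F, f ≤ y}) := fun x F hF => by
    refine (@isOpen_iff_forall_mem_open P (intervalTop P) _).2 fun z hz => ?_
    obtain ⟨b, hzb, hsub⟩ := exists_wayInterval_subset_wayup_diff hP hF hz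
    exact ⟨_, hsub, TopologicalSpace.isOpen_generateFrom_of_mem ⟨x, b, rfl⟩, hzb⟩
  have hle : intervalTop P ≤ lawsonTop P :=
    TopologicalSpace.le_generateFrom_iff_subset_isOpen.2 fun _ ⟨x, F, hF, hU⟩ => hU ▸ hbasic x F hF
  exact ⟨hbasic, fun U => hle U⟩
end

section
/- On a bicontinuous poset P, the order relation ≤ is a closed subset of P × P, where P × P carries the product of the interval topology with itself. -/
lemma wayBelow_le {P : Type*} [PartialOrder P] {a x : P} (h : WayBelow a x) : a ≤ x := by
  obtain ⟨b, hb, hab⟩ := h ({x} : Set P)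
    ⟨⟨x, rfl⟩, fun u hu v hv => ⟨x, rfl, le_of_eq hu, le_of_eq hv⟩⟩ x
    isLUB_singleton (le_refl x)
  exact le_of_le_of_eq hab hb

lemma wayInterval_open {P : Type*} [PartialOrder P] (a b : P) :
    @IsOpen P (intervalTop P) (wayInterval a b) :=
  TopologicalSpace.GenerateOpen.basic _ ⟨a, b, rfl⟩

/-- On a bicontinuous poset, the order is closed in the product of the interval
topology with itself. -/
theorem le_isClosed_interval {P : Type*} [PartialOrder P] (hP : IsBicontinuousPoset P) :
    @IsClosed (P × P) (@instTopologicalSpaceProd P P (intervalTop P) (intervalTop P))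
      {p : P × P | p.1 ≤ p.2} := by
  letI : TopologicalSpace P := intervalTop P
  obtain ⟨hcont, hdual, hup⟩ := hP
  rw [← isOpen_compl_iff, isOpen_prod_iff]
  intro x y hxy
  simp only [Set.mem_compl_iff, Set.mem_setOf_eq] at hxy
  -- get a ≪ x with ¬ a ≤ y
  obtain ⟨S, hSsub, hSdir, hSlub⟩ := hcont x
  have ha : ∃ a ∈ S, ¬ a ≤ y := by
    by_contra h
    push_neg at h
    exact hxy (hSlub.2 h)
  obtain ⟨a, haS, hay⟩ := ha
  have hax : WayBelow a x := hSsub haS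
  -- get c with x ≪ c
  obtain ⟨c, hc⟩ := (hup x).1.1
  -- get d with d ≪ y
  obtain ⟨T, hTsub, hTdir, hTlub⟩ := hcont y
  obtain ⟨d, hdT⟩ := hTdir.1
  have hdy : WayBelow d y := hTsub hdT
  -- get b with y ≪ b and ¬ a ≤ b
  have hb : ∃ b ∈ wayup y, ¬ a ≤ b := by
    by_contra h
    push_neg at h
    exact hay ((hup y).2.2 h)
  obtain ⟨b, hyb, hab⟩ := hb
  refine ⟨wayInterval a c, wayInterval d b, wayInterval_open a c, wayInterval_open d b,
    ⟨hax, hc⟩, ⟨hdy, hyb⟩, ?_⟩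
  rintro ⟨u, v⟩ ⟨⟨hau, _⟩, ⟨_, hvb⟩⟩
  simp only [Set.mem_compl_iff, Set.mem_setOf_eq]
  intro huv
  exact hab (le_trans (wayBelow_le hau) (le_trans huv (wayBelow_le hvb)))
end
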